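/- Suppose R is a field, let V be an A-module with H^1(Γ,V) = 0, and let q ≥ 1 with N = dim_R J_q/J_{q+1}. Then there is a short exact sequence 0 → H_q^0(Γ,Σ,V) → H_{q+1}^0(Γ,Σ,V) → H^0(Γ,V)^N → 0. Concretely: the annihilator submodule Ann(J_q,V) = {v ∈ V : J_q·v = 0} is contained in Ann(J_{q+1},V), and the quotient Ann(J_{q+1},V)/Ann(J_q,V) is isomorphic to the module of all maps from an R-basis of J_q/J_{q+1} to the fixed module V^Γ. -/

import Mathlib

open CategoryTheory

noncomputable section

variable (R : Type) [CommRing R] (Γ : Type) [Group Γ]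

/-- The augmentation map of the group algebra `A = R[Γ]`, sending each `γ ∈ Γ` to `1`. -/
def aug : MonoidAlgebra R Γ →ₐ[R] R := MonoidAlgebra.lift (R := R) (M := Γ) (A := R) 1

/-- The augmentation ideal `I = ker(aug) ⊆ A`. -/
def Iaug : Ideal (MonoidAlgebra R Γ) := RingHom.ker (aug R Γ).toRingHom

/-- `I` as an `R`-submodule of `A` (so that the powers `I^q` make sense). -/
def IaugR : Submodule R (MonoidAlgebra R Γ) := Submodule.restrictScalars R (Iaug R Γ)

/-- The augmentation ideal of `R[Σ]` viewed inside `A`: the `R`-span of `σ - 1`, `σ ∈ Σ`. -/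
def ISig (Sg : Subgroup Γ) : Submodule R (MonoidAlgebra R Γ) :=
  Submodule.span R {x | ∃ σ ∈ Sg, x = MonoidAlgebra.of R Γ σ - 1}

/-- The left ideal `A·I_Σ` generated by `I_Σ`. -/
def AISig (Sg : Subgroup Γ) : Ideal (MonoidAlgebra R Γ) :=
  Ideal.span (ISig R Γ Sg : Set (MonoidAlgebra R Γ))

/-- `J_q = I^q + A·I_Σ`. -/
def J (Sg : Subgroup Γ) (q : ℕ) : Ideal (MonoidAlgebra R Γ) :=
  Ideal.span ((IaugR R Γ ^ q : Submodule R (MonoidAlgebra R Γ)) : Set (MonoidAlgebra R Γ))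
    ⊔ AISig R Γ Sg

/-- `Ext_A^p(X, V)` as an abelian group (`ℤ`-module). -/
abbrev ExtG (p : ℕ) (X V : ModuleCat (MonoidAlgebra R Γ)) : Type :=
  ((Ext ℤ (ModuleCat (MonoidAlgebra R Γ)) p).obj (Opposite.op X)).obj V

/-- Ordinary group cohomology `H^p(Γ, V) = Ext_A^p(R, V)`, `R = A/I` the trivial module. -/
abbrev Hp (p : ℕ) (V : ModuleCat (MonoidAlgebra R Γ)) : Type :=
  ExtG R Γ p (ModuleCat.of _ (MonoidAlgebra R Γ ⧸ Iaug R Γ)) V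

/-- Higher order cohomology `H_q^p(Γ,Σ,V) = Ext_A^p(A/J_q, V)`. -/
abbrev Hqp (Sg : Subgroup Γ) (q p : ℕ) (V : ModuleCat (MonoidAlgebra R Γ)) : Type :=
  ExtG R Γ p (ModuleCat.of _ (MonoidAlgebra R Γ ⧸ J R Γ Sg q)) V

/-- The `A`-module `J_q / J_{q+1}`. -/
abbrev Jmod (Sg : Subgroup Γ) (q : ℕ) :=
  ↥(J R Γ Sg q) ⧸ (Submodule.comap (J R Γ Sg q).subtype (J R Γ Sg (q+1)))


/-- `Ann(J_q, V) = {v ∈ V : x·v = 0 for all x ∈ J_q}`, realizing `H_q^0(Γ,Σ,V)`. -/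
def AnnJ (Sg : Subgroup Γ) (q : ℕ) (V : ModuleCat (MonoidAlgebra R Γ)) : AddSubgroup ↥V where
  carrier := {v | ∀ x ∈ J R Γ Sg q, x • v = 0}
  add_mem' := fun ha hb x hx => by rw [smul_add, ha x hx, hb x hx, add_zero]
  zero_mem' := fun x _ => smul_zero x
  neg_mem' := fun ha x hx => by rw [smul_neg, ha x hx, neg_zero]

/-- The fixed module `V^Γ = H^0(Γ, V)`. -/
def FixPts (V : ModuleCat (MonoidAlgebra R Γ)) : AddSubgroup ↥V where
  carrier := {v | ∀ γ : Γ, (MonoidAlgebra.of R Γ γ) • v = v}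
  add_mem' := fun ha hb γ => by rw [smul_add, ha γ, hb γ]
  zero_mem' := fun γ => smul_zero _
  neg_mem' := fun ha γ => by rw [smul_neg, ha γ]

section Aux

variable {R : Type} [CommRing R] {Γ : Type} [Group Γ]

lemma mem_Iaug_iff {x : MonoidAlgebra R Γ} : x ∈ Iaug R Γ ↔ aug R Γ x = 0 :=
  RingHom.mem_ker

lemma aug_of (γ : Γ) : aug R Γ (MonoidAlgebra.of R Γ γ) = 1 := by
  simp [aug]

lemma of_sub_one_mem_Iaug (γ : Γ) : MonoidAlgebra.of R Γ γ - 1 ∈ Iaug R Γ := by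
  rw [mem_Iaug_iff, map_sub, map_one, aug_of, sub_self]

lemma Iaug_mul_mem {r : MonoidAlgebra R Γ} (hr : r ∈ Iaug R Γ) (a : MonoidAlgebra R Γ) :
    r * a ∈ Iaug R Γ := by
  rw [mem_Iaug_iff] at hr ⊢
  rw [map_mul, hr, zero_mul]

lemma sub_aug_mem_Iaug (a : MonoidAlgebra R Γ) :
    a - algebraMap R (MonoidAlgebra R Γ) (aug R Γ a) ∈ Iaug R Γ := by
  rw [mem_Iaug_iff, map_sub, AlgHom.commutes]
  simp

lemma J_succ_le (Sg : Subgroup Γ) (q : ℕ) : J R Γ Sg (q + 1) ≤ J R Γ Sg q := by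
  apply sup_le_sup_right
  rw [Ideal.span_le]
  intro m hm
  have hm' : m ∈ IaugR R Γ * IaugR R Γ ^ q := by rwa [← pow_succ'] 
  refine Submodule.mul_induction_on hm' (fun x _ y hy => ?_) (fun x y hx hy => add_mem hx hy)
  exact Ideal.mul_mem_left _ x (Ideal.subset_span hy)

lemma J_zero (Sg : Subgroup Γ) : J R Γ Sg 0 = ⊤ := by
  rw [Ideal.eq_top_iff_one]
  refine Submodule.mem_sup_left (Ideal.subset_span ?_)
  rw [pow_zero]
  exact Submodule.one_le.mp le_rfl

lemma mul_J_mem (Sg : Subgroup Γ) {r x : MonoidAlgebra R Γ} (hr : r ∈ Iaug R Γ) {q : ℕ}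
    (hx : x ∈ J R Γ Sg q) : r * x ∈ J R Γ Sg (q + 1) := by
  obtain ⟨y, hy, z, hz, rfl⟩ := Submodule.mem_sup.1 hx
  rw [mul_add]
  refine add_mem (Submodule.mem_sup_left ?_) (Submodule.mem_sup_right ?_)
  · have key : ∀ y ∈ Ideal.span ((IaugR R Γ ^ q : Submodule R (MonoidAlgebra R Γ)) :
        Set (MonoidAlgebra R Γ)), ∀ r ∈ Iaug R Γ,
        r * y ∈ Ideal.span ((IaugR R Γ ^ (q+1) : Submodule R (MonoidAlgebra R Γ)) :
          Set (MonoidAlgebra R Γ)) := by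
      intro y hy
      refine Submodule.span_induction ?_ ?_ ?_ ?_ hy
      · intro m hm r hr
        refine Ideal.subset_span ?_
        rw [pow_succ']
        exact Submodule.mul_mem_mul hr hm
      · intro r _; rw [mul_zero]; exact zero_mem _
      · intro a b _ _ ha hb r hr
        rw [mul_add]; exact add_mem (ha r hr) (hb r hr)
      · intro a m _ hm r hr
        rw [smul_eq_mul, ← mul_assoc]
        exact hm (r * a) (Iaug_mul_mem hr a)
    exact key y hy r hr
  · exact Ideal.mul_mem_left _ r hz

end Aux

section Aux2

variable {R : Type} [CommRing R] {Γ : Type} [Group Γ]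
variable {M : Type} [AddCommGroup M] [Module (MonoidAlgebra R Γ) M]

lemma smul_eq_aug_smul_of_fixed (v : M) (hv : ∀ γ : Γ, MonoidAlgebra.of R Γ γ • v = v)
    (a : MonoidAlgebra R Γ) :
    a • v = algebraMap R (MonoidAlgebra R Γ) (aug R Γ a) • v := by
  induction a using MonoidAlgebra.induction_linear with
  | zero => simp
  | add f g hf hg => rw [add_smul, map_add, map_add, add_smul, hf, hg]
  | single γ c =>
      have h1 : (MonoidAlgebra.single γ c : MonoidAlgebra R Γ)
          = algebraMap R (MonoidAlgebra R Γ) c * MonoidAlgebra.of R Γ γ := by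
        rw [MonoidAlgebra.coe_algebraMap]
        show (MonoidAlgebra.single γ c : MonoidAlgebra R Γ)
          = MonoidAlgebra.single (1:Γ) c * MonoidAlgebra.single γ (1:R)
        rw [MonoidAlgebra.single_mul_single, one_mul, mul_one]
      rw [h1, map_mul, AlgHom.commutes, aug_of, mul_one, mul_smul, hv γ]
      norm_num

lemma Iaug_smul_fixed (v : M) (hv : ∀ γ : Γ, MonoidAlgebra.of R Γ γ • v = v)
    {r : MonoidAlgebra R Γ} (hr : r ∈ Iaug R Γ) : r • v = 0 := by
  rw [smul_eq_aug_smul_of_fixed v hv r, mem_Iaug_iff.1 hr, map_zero, zero_smul]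

variable [Module R M] [IsScalarTower R (MonoidAlgebra R Γ) M]
variable {N : Type} [AddCommGroup N] [Module (MonoidAlgebra R Γ) N]
variable [Module R N] [IsScalarTower R (MonoidAlgebra R Γ) N]

/-- An `R`-linear, `Γ`-equivariant map is `A`-linear. -/
lemma map_smul_of_gamma (f : M →ₗ[R] N)
    (hf : ∀ (γ : Γ) (m : M), f (MonoidAlgebra.of R Γ γ • m) = MonoidAlgebra.of R Γ γ • f m)
    (a : MonoidAlgebra R Γ) (m : M) : f (a • m) = a • f m := by
  induction a using MonoidAlgebra.induction_linear with
  | zero => simp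
  | add p q hp hq => rw [add_smul, add_smul, map_add, hp, hq]
  | single γ c =>
      have h1 : (MonoidAlgebra.single γ c : MonoidAlgebra R Γ)
          = algebraMap R (MonoidAlgebra R Γ) c * MonoidAlgebra.of R Γ γ := by
        rw [MonoidAlgebra.coe_algebraMap]
        show (MonoidAlgebra.single γ c : MonoidAlgebra R Γ)
          = MonoidAlgebra.single (1:Γ) c * MonoidAlgebra.single γ (1:R)
        rw [MonoidAlgebra.single_mul_single, one_mul, mul_one]
      rw [h1, mul_smul, mul_smul, algebraMap_smul, algebraMap_smul, map_smul, hf]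

end Aux2

section ExtLift

variable {R : Type} [CommRing R] {Γ : Type} [Group Γ]

lemma ext_lift (V : ModuleCat (MonoidAlgebra R Γ)) (h1 : Subsingleton (Hp R Γ 1 V))
    (f : ↥(Iaug R Γ) →ₗ[MonoidAlgebra R Γ] ↥V) :
    ∃ v : ↥V, ∀ (x : MonoidAlgebra R Γ) (hx : x ∈ Iaug R Γ), f ⟨x, hx⟩ = x • v := by
  classical
  let X : ModuleCat (MonoidAlgebra R Γ) := ModuleCat.of (MonoidAlgebra R Γ) ((MonoidAlgebra R Γ) ⧸ Iaug R Γ)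
  let P : ProjectiveResolution X := ProjectiveResolution.of X
  let K := P.complex.linearYonedaObj ℤ V
  haveI hsub1 : Subsingleton
      ((forget (ModuleCat ℤ)).obj
        (((Ext ℤ (ModuleCat (MonoidAlgebra R Γ)) 1).obj (Opposite.op X)).obj V)) := h1
  haveI hsub : Subsingleton ((forget (ModuleCat ℤ)).obj (K.homology 1)) :=
    Equiv.subsingleton ((forget (ModuleCat ℤ)).mapIso (P.isoExt 1 V)).symm.toEquiv
  haveI hsub2 : Subsingleton ((K.homology 1) : Type) := hsub
  have hz : Limits.IsZero (K.homology 1) := ModuleCat.isZero_of_subsingleton _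
  have hK : K.ExactAt 1 := (HomologicalComplex.exactAt_iff_isZero_homology _ _).2 hz
  have hex := (HomologicalComplex.exactAt_iff' K 0 1 2 (by simp) (by simp)).1 hK
  rw [ShortComplex.moduleCat_exact_iff] at hex
  let Amod : ModuleCat (MonoidAlgebra R Γ) := ModuleCat.of (MonoidAlgebra R Γ) (MonoidAlgebra R Γ)
  haveI : Projective Amod := ModuleCat.projective_of_free (Module.Basis.singleton PUnit.{1} (MonoidAlgebra R Γ))
  let πX : Amod ⟶ X := ModuleCat.ofHom (Iaug R Γ).mkQ
  haveI : Epi πX := (ModuleCat.epi_iff_surjective _).2 (Submodule.mkQ_surjective _)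
  let e0 : ((ChainComplex.single₀ (ModuleCat (MonoidAlgebra R Γ))).obj X).X 0 ≅ X :=
    HomologicalComplex.singleObjXSelf (ComplexShape.down ℕ) 0 X
  let π0 : P.complex.X 0 ⟶ X := P.π.f 0 ≫ e0.hom
  haveI : Epi π0 := epi_comp _ _
  let α : Amod ⟶ P.complex.X 0 := Projective.factorThru πX π0
  have hα : α ≫ π0 = πX := Projective.factorThru_comp _ _
  let β : P.complex.X 0 ⟶ Amod := Projective.factorThru π0 πX
  have hβ : β ≫ πX = π0 := Projective.factorThru_comp _ _
  let oneA : ↑Amod := (1 : MonoidAlgebra R Γ)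
  have hexact0 := P.exact₀
  rw [ShortComplex.moduleCat_exact_iff] at hexact0
  have hker : ∀ p : P.complex.X 0, π0 p = 0 → ∃ m, P.complex.d 1 0 m = p := by
    intro p hp
    apply hexact0
    have h2 : e0.hom (P.π.f 0 p) = 0 := hp
    have h3 : e0.hom (P.π.f 0 p) = P.π.f 0 p := by
      show (HomologicalComplex.singleObjXSelf (ComplexShape.down ℕ) 0 X).hom (P.π.f 0 p)
        = P.π.f 0 p
      rw [ChainComplex.single₀ObjXSelf]
      rfl
    rw [← h3]
    exact h2
  have hmemχ : ∀ m : P.complex.X 1, β (P.complex.d 1 0 m) ∈ Iaug R Γ := by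
    intro m
    have h0 : πX (β (P.complex.d 1 0 m)) = 0 := by
      have : (P.complex.d 1 0 ≫ β ≫ πX) m = 0 := by
        rw [hβ]
        show (P.complex.d 1 0 ≫ P.π.f 0 ≫ e0.hom) m = 0
        rw [← Category.assoc, P.complex_d_comp_π_f_zero]
        rfl
      simpa using this
    exact (Submodule.Quotient.mk_eq_zero _).1 h0
  let χ : P.complex.X 1 →ₗ[(MonoidAlgebra R Γ)] ↥(Iaug R Γ) :=
    LinearMap.codRestrict (Iaug R Γ) (β.hom.comp (P.complex.d 1 0).hom) hmemχ
  let φ : P.complex.X 1 ⟶ V := ModuleCat.ofHom (f.comp χ)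
  have hd01 : ∀ (g : P.complex.X 0 ⟶ V), K.d 0 1 g = P.complex.d 1 0 ≫ g := by
    intro g
    rw [ChainComplex.linearYonedaObj_d]
    rfl
  have hd12 : ∀ (g : P.complex.X 1 ⟶ V), K.d 1 2 g = P.complex.d 2 1 ≫ g := by
    intro g
    rw [ChainComplex.linearYonedaObj_d]
    rfl
  have hφ : (K.sc' 0 1 2).g φ = 0 := by
    show K.d 1 2 φ = 0
    rw [hd12]
    show P.complex.d 2 1 ≫ φ = (0 : P.complex.X 2 ⟶ V)
    apply ModuleCat.hom_ext
    apply LinearMap.ext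
    intro m
    show f (χ (P.complex.d 2 1 m)) = 0
    have h5 : P.complex.d 1 0 (P.complex.d 2 1 m) = 0 := by
      exact congrArg (fun (g : P.complex.X 2 ⟶ P.complex.X 0) => g m) (P.complex.d_comp_d 2 1 0)
    have h7 : χ (P.complex.d 2 1 m) = 0 := by
      apply Subtype.ext
      show β (P.complex.d 1 0 (P.complex.d 2 1 m)) = 0
      rw [h5, map_zero]
    rw [h7, map_zero]
  obtain ⟨ψ₀, hψ⟩ := hex φ hφ
  let ψ : P.complex.X 0 ⟶ V := ψ₀
  have hψ' : ∀ m, ψ (P.complex.d 1 0 m) = φ m := by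
    intro m
    have h6 : K.d 0 1 ψ = φ := hψ
    rw [hd01] at h6
    exact congrArg (fun (g : P.complex.X 1 ⟶ V) => g m) h6
  obtain ⟨w', hw'⟩ : ∃ w : MonoidAlgebra R Γ, w = β (α oneA) := ⟨_, rfl⟩
  have hmemv : w' - 1 ∈ Iaug R Γ := by
    have h0 : πX ((w' - 1 : MonoidAlgebra R Γ)) = 0 := by
      have h1' : πX (β (α oneA)) = π0 (α oneA) := by
        rw [← hβ]; rfl
      have h2' : π0 (α oneA) = πX oneA := by
        rw [← hα]; rfl
      have h3' : πX ((w' - 1 : MonoidAlgebra R Γ)) = πX w' - πX oneA := map_sub _ _ _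
      rw [h3', hw', h1', h2', sub_self]
    exact (Submodule.Quotient.mk_eq_zero _).1 h0
  refine ⟨ψ (α oneA) - f ⟨w' - 1, hmemv⟩, ?_⟩
  intro x hx
  have hax : π0 (α x) = 0 := by
    have h2' : π0 (α x) = πX x := by rw [← hα]; rfl
    rw [h2']
    exact (Submodule.Quotient.mk_eq_zero _).2 hx
  obtain ⟨m, hm⟩ := hker _ hax
  have hxα : (x • α oneA : P.complex.X 0) = α x := by
    rw [← map_smul]
    congr 1
    show x • oneA = x
    rw [smul_eq_mul, mul_one]
  have hψα : ψ (α x) = f ⟨x * w', Iaug_mul_mem hx _⟩ := by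
    rw [← hm, hψ']
    show f (χ m) = _
    congr 1
    apply Subtype.ext
    show β (P.complex.d 1 0 m) = x * w'
    rw [hm, show α x = x • α oneA from hxα.symm, map_smul, hw']
    rfl
  have e1 : x • (ψ (α oneA) - f ⟨w' - 1, hmemv⟩)
      = ψ (x • α oneA) - f (x • ⟨w' - 1, hmemv⟩) := by
    rw [smul_sub, map_smul, map_smul]
  rw [e1, hxα, hψα, ← map_sub]
  congr 1
  apply Subtype.ext
  show x = x * w' - x • (w' - 1)
  rw [smul_eq_mul, mul_sub, mul_one, sub_sub_cancel]

end ExtLift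

section Step

variable {R : Type} [CommRing R] {Γ : Type} [Group Γ]

set_option maxHeartbeats 2000000 in
set_option synthInstance.maxHeartbeats 400000 in
lemma step_extend (hR : IsField R) (V : ModuleCat (MonoidAlgebra R Γ))
    (h1 : Subsingleton (Hp R Γ 1 V)) (U W : Ideal (MonoidAlgebra R Γ)) (hWU : W ≤ U)
    (hIU : ∀ r ∈ Iaug R Γ, ∀ x ∈ U, r * x ∈ W)
    (h : ↥W →ₗ[MonoidAlgebra R Γ] ↥V) :
    ∃ H : ↥U →ₗ[MonoidAlgebra R Γ] ↥V, ∀ (x : MonoidAlgebra R Γ) (hx : x ∈ W),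
      H ⟨x, hWU hx⟩ = h ⟨x, hx⟩ := by
  classical
  letI : Field R := hR.toField
  letI : Module R ↥V := Module.compHom _ (algebraMap R (MonoidAlgebra R Γ))
  haveI : IsScalarTower R (MonoidAlgebra R Γ) ↥V :=
    ⟨fun c a v => by
      show (c • a) • v = (algebraMap R (MonoidAlgebra R Γ) c) • a • v
      rw [Algebra.smul_def, mul_smul]⟩
  haveI : SMulCommClass R (MonoidAlgebra R Γ) ↥V :=
    ⟨fun c a v => by
      show (algebraMap R (MonoidAlgebra R Γ) c) • a • v
        = a • (algebraMap R (MonoidAlgebra R Γ) c) • v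
      rw [← mul_smul, ← mul_smul, Algebra.commutes]⟩
  haveI : SMulCommClass (MonoidAlgebra R Γ) R ↥V := SMulCommClass.symm _ _ _
  let W' : Submodule R ↥U := Submodule.restrictScalars R (Submodule.comap U.subtype W)
  obtain ⟨Cc, hC⟩ := Submodule.exists_isCompl W'
  let projW : ↥U →ₗ[R] ↥W' := W'.linearProjOfIsCompl Cc hC
  let projC : ↥U →ₗ[R] ↥Cc := Cc.linearProjOfIsCompl W' hC.symm
  have hdecomp : ∀ u : ↥U, (projW u : ↥U) + (projC u : ↥U) = u :=
    fun u => Submodule.projection_add_projection_eq_self hC u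
  -- inclusion of W' into W
  let inclWW : ↥W' →ₗ[R] ↥W :=
    { toFun := fun z => ⟨((z : ↥U) : MonoidAlgebra R Γ), z.2⟩
      map_add' := fun _ _ => rfl
      map_smul' := fun _ _ => rfl }
  let hW : ↥W' →ₗ[R] ↥V := (h.restrictScalars R).comp inclWW
  -- the chosen primitives for basis vectors of the complement
  have hmemF : ∀ (u : ↥U) (r : MonoidAlgebra R Γ), r ∈ Iaug R Γ →
      r * (u : MonoidAlgebra R Γ) ∈ W := fun u r hr => hIU r hr u u.2
  let Fmap : ↥U → (↥(Iaug R Γ) →ₗ[MonoidAlgebra R Γ] ↥V) := fun u =>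
    { toFun := fun r => h ⟨(r : MonoidAlgebra R Γ) * (u : MonoidAlgebra R Γ), hmemF u r r.2⟩
      map_add' := by
        intro r t
        rw [← map_add]
        congr 1
        apply Subtype.ext
        show ((r : MonoidAlgebra R Γ) + t) * u = (r : MonoidAlgebra R Γ) * u + t * u
        rw [add_mul]
      map_smul' := by
        intro a r
        show h _ = a • h _
        rw [← map_smul]
        congr 1
        apply Subtype.ext
        show (a * (r : MonoidAlgebra R Γ)) * (u : MonoidAlgebra R Γ)
          = a * ((r : MonoidAlgebra R Γ) * u)
        rw [mul_assoc] }
  let BC := Module.Basis.ofVectorSpace R ↥Cc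
  have hchoose : ∀ s : ↑(Module.Basis.ofVectorSpaceIndex R ↥Cc), ∃ v : ↥V,
      ∀ (x : MonoidAlgebra R Γ) (hx : x ∈ Iaug R Γ),
        Fmap ((BC s : ↥Cc) : ↥U) ⟨x, hx⟩ = x • v :=
    fun s => ext_lift V h1 (Fmap ((BC s : ↥Cc) : ↥U))
  choose w hw using hchoose
  let L : ↥Cc →ₗ[R] ↥V := BC.constr ℕ w
  -- key identity on the complement
  have hkey : ∀ (r : MonoidAlgebra R Γ) (hr : r ∈ Iaug R Γ) (z : ↥Cc),
      h ⟨r * ((z : ↥U) : MonoidAlgebra R Γ), hmemF _ r hr⟩ = r • L z := by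
    intro r hr
    let mult : ↥Cc →ₗ[R] ↥W :=
      { toFun := fun z => ⟨r * ((z : ↥U) : MonoidAlgebra R Γ), hmemF _ r hr⟩
        map_add' := by
          intro a b
          apply Subtype.ext
          show r * (((a : ↥U) : MonoidAlgebra R Γ) + (b : ↥U)) = r * (a : ↥U) + r * (b : ↥U)
          rw [mul_add]
        map_smul' := by
          intro c z
          apply Subtype.ext
          show r * ((((c • z) : ↥Cc) : ↥U) : MonoidAlgebra R Γ)
            = c • (r * ((z : ↥U) : MonoidAlgebra R Γ))
          have : ((((c • z) : ↥Cc) : ↥U) : MonoidAlgebra R Γ)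
              = c • (((z : ↥U) : MonoidAlgebra R Γ)) := rfl
          rw [this, mul_smul_comm] }
    let M1 : ↥Cc →ₗ[R] ↥V := (h.restrictScalars R).comp mult
    let M2 : ↥Cc →ₗ[R] ↥V :=
      { toFun := fun z => r • L z
        map_add' := by intro a b; rw [map_add, smul_add]
        map_smul' := by intro c z; rw [map_smul]; exact smul_comm r c (L z) }
    have : M1 = M2 := by
      apply BC.ext
      intro s
      show h _ = r • L (BC s)
      rw [show L (BC s) = w s from BC.constr_basis ℕ w s]
      exact hw s r hr
    intro z
    exact congrArg (fun (g : ↥Cc →ₗ[R] ↥V) => g z) this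
  let h' : ↥U →ₗ[R] ↥V := hW.comp projW + L.comp projC
  have happly : ∀ u : ↥U, h' u = hW (projW u) + L (projC u) := fun u => rfl
  have hgamma : ∀ (γ : Γ) (u : ↥U),
      h' (MonoidAlgebra.of R Γ γ • u) = MonoidAlgebra.of R Γ γ • h' u := by
    intro γ u
    have hr : MonoidAlgebra.of R Γ γ - 1 ∈ Iaug R Γ := of_sub_one_mem_Iaug γ
    set g1 : MonoidAlgebra R Γ := MonoidAlgebra.of R Γ γ with hg1
    have hruW : (g1 - 1) * (u : MonoidAlgebra R Γ) ∈ W := hIU _ hr _ u.2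
    have hmemru : (⟨(g1 - 1) * (u : MonoidAlgebra R Γ), hWU hruW⟩ : ↥U) ∈ W' := hruW
    have hdecu : g1 • u = u + ⟨(g1 - 1) * (u : MonoidAlgebra R Γ), hWU hruW⟩ := by
      apply Subtype.ext
      show g1 * (u : MonoidAlgebra R Γ) = (u : MonoidAlgebra R Γ) + (g1 - 1) * u
      rw [sub_mul, one_mul, add_sub_cancel]
    have hpW : projW (g1 • u) = projW u + ⟨_, hmemru⟩ := by
      rw [hdecu, map_add]; exact congrArg (projW u + ·) (Submodule.linearProjOfIsCompl_apply_left hC ⟨_, hmemru⟩)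
    have hpC : projC (g1 • u) = projC u := by
      rw [hdecu, map_add, show projC ⟨_, _⟩ = 0 from Submodule.linearProjOfIsCompl_apply_right' hC.symm hmemru,
        add_zero]
    have hlhs : h' (g1 • u) = hW (projW u) + h ⟨(g1 - 1) * (u : MonoidAlgebra R Γ), hruW⟩
        + L (projC u) := by
      rw [happly, hpW, hpC, map_add]
      rfl
    have hrhs : g1 • h' u
        = hW (projW u) + L (projC u) + ((g1 - 1) • hW (projW u) + (g1 - 1) • L (projC u)) := by
      have e1 : g1 • h' u = h' u + (g1 - 1) • h' u := by
        rw [sub_smul, one_smul, add_sub_cancel]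
      rw [e1, happly, smul_add]
    have e2 : (g1 - 1) • hW (projW u) = h ((g1 - 1) • inclWW (projW u)) :=
      (h.map_smul _ _).symm
    have e3 : (g1 - 1) • L (projC u)
        = h ⟨(g1 - 1) * ((projC u : ↥U) : MonoidAlgebra R Γ), hmemF _ _ hr⟩ :=
      (hkey _ hr (projC u)).symm
    have key2 : h ((g1 - 1) • inclWW (projW u))
        + h ⟨(g1 - 1) * ((projC u : ↥U) : MonoidAlgebra R Γ), hmemF _ _ hr⟩
        = h ⟨(g1 - 1) * (u : MonoidAlgebra R Γ), hruW⟩ := by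
      rw [← map_add]
      congr 1
      apply Subtype.ext
      show (g1 - 1) * ((projW u : ↥U) : MonoidAlgebra R Γ)
          + (g1 - 1) * ((projC u : ↥U) : MonoidAlgebra R Γ)
        = (g1 - 1) * (u : MonoidAlgebra R Γ)
      rw [← mul_add]
      congr 1
      exact congrArg (fun (z : ↥U) => (z : MonoidAlgebra R Γ)) (hdecomp u)
    rw [hlhs, hrhs, e2, e3, ← key2]
    abel
  let H : ↥U →ₗ[MonoidAlgebra R Γ] ↥V :=
    { toFun := h'
      map_add' := h'.map_add
      map_smul' := fun a u => map_smul_of_gamma h' hgamma a u }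
  refine ⟨H, ?_⟩
  intro x hx
  show h' ⟨x, hWU hx⟩ = h ⟨x, hx⟩
  have hzW : (⟨x, hWU hx⟩ : ↥U) ∈ W' := hx
  have p1 : projW ⟨x, hWU hx⟩ = ⟨⟨x, hWU hx⟩, hzW⟩ :=
    Submodule.linearProjOfIsCompl_apply_left hC ⟨⟨x, hWU hx⟩, hzW⟩
  have p2 : projC ⟨x, hWU hx⟩ = 0 :=
    Submodule.linearProjOfIsCompl_apply_right' hC.symm hzW
  rw [happly, p1, p2, map_zero, add_zero]
  rfl

lemma extend_from_J (hR : IsField R) (Sg : Subgroup Γ) (V : ModuleCat (MonoidAlgebra R Γ))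
    (h1 : Subsingleton (Hp R Γ 1 V)) :
    ∀ (j : ℕ) (F : ↥(J R Γ Sg j) →ₗ[MonoidAlgebra R Γ] ↥V), ∃ v : ↥V,
      ∀ (x : MonoidAlgebra R Γ) (hx : x ∈ J R Γ Sg j), F ⟨x, hx⟩ = x • v := by
  intro j
  induction j with
  | zero =>
      intro F
      have h1mem : (1 : MonoidAlgebra R Γ) ∈ J R Γ Sg 0 := by
        rw [J_zero]; trivial
      refine ⟨F ⟨1, h1mem⟩, ?_⟩
      intro x hx
      have : (⟨x, hx⟩ : ↥(J R Γ Sg 0)) = x • ⟨1, h1mem⟩ := by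
        apply Subtype.ext
        show x = x * 1
        rw [mul_one]
      rw [this, map_smul]
  | succ j ih =>
      intro F
      obtain ⟨H, hH⟩ := step_extend hR V h1 (J R Γ Sg j) (J R Γ Sg (j + 1))
        (J_succ_le Sg j) (fun r hr x hx => mul_J_mem Sg hr hx) F
      obtain ⟨v, hv⟩ := ih H
      refine ⟨v, ?_⟩
      intro x hx
      rw [← hH x hx]
      exact hv x (J_succ_le Sg j hx)

end Step


set_option maxHeartbeats 2000000 in
set_option synthInstance.maxHeartbeats 400000 in
/-- Suppose `R` is a field, let `V` be an `A`-module with `H^1(Γ,V) = 0`,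
and let `q ≥ 1`, with `N = dim_R J_q/J_{q+1}` realized by an `R`-basis indexed by `S`.
Then there is a short exact sequence
`0 → H_q^0(Γ,Σ,V) → H_{q+1}^0(Γ,Σ,V) → H^0(Γ,V)^N → 0`. Concretely:
`Ann(J_q,V) ⊆ Ann(J_{q+1},V)`, and the quotient `Ann(J_{q+1},V)/Ann(J_q,V)` is isomorphic to
the module of all maps from an `R`-basis of `J_q/J_{q+1}` to the fixed module `V^Γ`
(expressed via a surjection with kernel exactly `Ann(J_q,V)`). -/
theorem ann_short_exact_sequence (hR : IsField R) (Sg : Subgroup Γ) [Sg.Normal]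
    (V : ModuleCat (MonoidAlgebra R Γ)) (h1 : Subsingleton (Hp R Γ 1 V))
    (q : ℕ) (hq : 1 ≤ q) :
    (AnnJ R Γ Sg q V : Set ↥V) ⊆ (AnnJ R Γ Sg (q + 1) V : Set ↥V) ∧
    ∃ (S : Type) (_ : Module.Basis S R (Jmod R Γ Sg q))
      (φ : ↥(AnnJ R Γ Sg (q + 1) V) →+ (S → ↥(FixPts R Γ V))),
      Function.Surjective φ ∧
      ∀ v : ↥(AnnJ R Γ Sg (q + 1) V), φ v = 0 ↔ (v : ↥V) ∈ AnnJ R Γ Sg q V := by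
  classical
  letI : Field R := hR.toField
  letI : Module R ↥V := Module.compHom _ (algebraMap R (MonoidAlgebra R Γ))
  haveI : IsScalarTower R (MonoidAlgebra R Γ) ↥V :=
    ⟨fun c a v => by
      show (c • a) • v = (algebraMap R (MonoidAlgebra R Γ) c) • a • v
      rw [Algebra.smul_def, mul_smul]⟩
  constructor
  · intro v hv x hx
    exact hv x (J_succ_le Sg q hx)
  · set p : Submodule (MonoidAlgebra R Γ) ↥(J R Γ Sg q) :=
      Submodule.comap (J R Γ Sg q).subtype (J R Γ Sg (q + 1)) with hp
    let mk1 : ↥(J R Γ Sg q) →ₗ[MonoidAlgebra R Γ] Jmod R Γ Sg q := p.mkQ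
    let B : Module.Basis ↑(Module.Basis.ofVectorSpaceIndex R (Jmod R Γ Sg q)) R (Jmod R Γ Sg q) :=
      Module.Basis.ofVectorSpace R (Jmod R Γ Sg q)
    let ell : ↥(AnnJ R Γ Sg (q + 1) V) → (Jmod R Γ Sg q →ₗ[MonoidAlgebra R Γ] ↥V) :=
      fun v => Submodule.liftQ p
        ((LinearMap.toSpanSingleton (MonoidAlgebra R Γ) ↥V (v : ↥V)).comp
          (J R Γ Sg q).subtype)
        (fun z hz => v.2 z.1 hz)
    have hellmk : ∀ (v : ↥(AnnJ R Γ Sg (q + 1) V)) (z : ↥(J R Γ Sg q)),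
        ell v (Submodule.Quotient.mk z) = (z : MonoidAlgebra R Γ) • (v : ↥V) :=
      fun v z => Submodule.liftQ_apply _ _ _
    have hfix : ∀ (v : ↥(AnnJ R Γ Sg (q + 1) V)) (m : Jmod R Γ Sg q),
        ell v m ∈ FixPts R Γ V := by
      intro v m
      obtain ⟨z, hz⟩ := Submodule.Quotient.mk_surjective p m
      rw [← hz]
      intro γ
      show MonoidAlgebra.of R Γ γ • (ell v (Submodule.Quotient.mk z))
        = ell v (Submodule.Quotient.mk z)
      rw [hellmk, ← mul_smul]
      have hsplit : (MonoidAlgebra.of R Γ γ) * (z : MonoidAlgebra R Γ)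
          = (MonoidAlgebra.of R Γ γ - 1) * (z : MonoidAlgebra R Γ)
            + (z : MonoidAlgebra R Γ) := by
        rw [sub_mul, one_mul, sub_add_cancel]
      rw [hsplit, add_smul, v.2 _ (mul_J_mem Sg (of_sub_one_mem_Iaug γ) z.2), zero_add]
    let φfun : ↥(AnnJ R Γ Sg (q + 1) V) →
        (↑(Module.Basis.ofVectorSpaceIndex R (Jmod R Γ Sg q)) → ↥(FixPts R Γ V)) :=
      fun v s => ⟨ell v (B s), hfix v (B s)⟩
    have hadd : ∀ v w, φfun (v + w) = φfun v + φfun w := by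
      intro v w
      funext s
      apply Subtype.ext
      show ell (v + w) (B s) = ell v (B s) + ell w (B s)
      obtain ⟨z, hz⟩ := Submodule.Quotient.mk_surjective p (B s)
      rw [← hz, hellmk, hellmk, hellmk]
      show (z : MonoidAlgebra R Γ) • ((v : ↥V) + (w : ↥V)) = _
      rw [smul_add]
    refine ⟨↑(Module.Basis.ofVectorSpaceIndex R (Jmod R Γ Sg q)), B, AddMonoidHom.mk' φfun hadd,
      ?_, ?_⟩
    · -- surjectivity
      intro g
      let FixSub : Submodule R ↥V :=
        { carrier := (FixPts R Γ V : Set ↥V)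
          add_mem' := fun ha hb => (FixPts R Γ V).add_mem ha hb
          zero_mem' := (FixPts R Γ V).zero_mem
          smul_mem' := by
            intro c v hv γ
            show MonoidAlgebra.of R Γ γ • (algebraMap R (MonoidAlgebra R Γ) c • v)
              = c • v
            rw [← mul_smul, ← Algebra.commutes c (MonoidAlgebra.of R Γ γ), mul_smul, hv γ]
            rfl }
      let f0 : Jmod R Γ Sg q →ₗ[R] ↥V := B.constr ℕ (fun s => ((g s : ↥V)))
      have him : ∀ m : Jmod R Γ Sg q, f0 m ∈ FixSub := by
        intro m
        have hle : (⊤ : Submodule R (Jmod R Γ Sg q)) ≤ FixSub.comap f0 := by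
          rw [← B.span_eq]
          apply Submodule.span_le.2
          rintro _ ⟨s, rfl⟩
          show f0 (B s) ∈ FixSub
          rw [show f0 (B s) = (g s : ↥V) from B.constr_basis ℕ _ s]
          exact (g s).2
        exact hle Submodule.mem_top
      have hsmul : ∀ (a : MonoidAlgebra R Γ) (z : ↥(J R Γ Sg q)),
          f0 (mk1 (a • z)) = a • f0 (mk1 z) := by
        intro a z
        have hra : a - algebraMap R (MonoidAlgebra R Γ) (aug R Γ a) ∈ Iaug R Γ :=
          sub_aug_mem_Iaug a
        have ha : a = algebraMap R (MonoidAlgebra R Γ) (aug R Γ a)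
            + (a - algebraMap R (MonoidAlgebra R Γ) (aug R Γ a)) := by abel
        have hz0 : mk1 ((a - algebraMap R (MonoidAlgebra R Γ) (aug R Γ a)) • z) = 0 := by
          show (Submodule.Quotient.mk
            ((a - algebraMap R (MonoidAlgebra R Γ) (aug R Γ a)) • z) : Jmod R Γ Sg q) = 0
          rw [Submodule.Quotient.mk_eq_zero]
          exact mul_J_mem Sg hra z.2
        have h1 : mk1 (a • z) = (aug R Γ a) • mk1 z := by
          conv_lhs => rw [ha]
          rw [add_smul, map_add, hz0, add_zero, map_smul, algebraMap_smul]
        rw [h1, map_smul]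
        conv_rhs => rw [ha]
        rw [add_smul, Iaug_smul_fixed (f0 (mk1 z)) (him (mk1 z)) hra, add_zero,
          algebraMap_smul]
      let F : ↥(J R Γ Sg q) →ₗ[MonoidAlgebra R Γ] ↥V :=
        { toFun := fun z => f0 (mk1 z)
          map_add' := by intro a b; rw [map_add, map_add]
          map_smul' := hsmul }
      obtain ⟨v, hv⟩ := extend_from_J hR Sg V h1 q F
      have hvann : v ∈ AnnJ R Γ Sg (q + 1) V := by
        intro x hx
        have hxq : x ∈ J R Γ Sg q := J_succ_le Sg q hx
        rw [← hv x hxq]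
        show f0 (mk1 ⟨x, hxq⟩) = 0
        have hm0 : mk1 ⟨x, hxq⟩ = 0 := by
          show (Submodule.Quotient.mk (⟨x, hxq⟩ : ↥(J R Γ Sg q)) : Jmod R Γ Sg q) = 0
          rw [Submodule.Quotient.mk_eq_zero]
          exact hx
        rw [hm0, map_zero]
      refine ⟨⟨v, hvann⟩, ?_⟩
      funext s
      apply Subtype.ext
      show ell ⟨v, hvann⟩ (B s) = (g s : ↥V)
      obtain ⟨z, hz⟩ := Submodule.Quotient.mk_surjective p (B s)
      rw [← hz, hellmk]
      have e5 : (z : MonoidAlgebra R Γ) • v = F z := by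
        rw [← hv z.1 z.2]
      rw [e5]
      show f0 (mk1 z) = (g s : ↥V)
      rw [show (mk1 z : Jmod R Γ Sg q) = B s from hz]
      exact B.constr_basis ℕ _ s
    · -- kernel
      intro v
      constructor
      · intro h0 x hx
        have hB : ∀ s, ell v (B s) = 0 := by
          intro s
          have := congrFun (show φfun v = 0 from h0) s
          exact Subtype.ext_iff.1 this
        have hzero : ∀ m : Jmod R Γ Sg q, ell v m = 0 := by
          intro m
          let Ker : Submodule R (Jmod R Γ Sg q) :=
            { carrier := {m | ell v m = 0}
              add_mem' := by
                intro a b ha hb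
                show ell v (a + b) = 0
                rw [map_add, ha, hb, add_zero]
              zero_mem' := map_zero _
              smul_mem' := by
                intro c m hm
                show ell v (c • m) = 0
                rw [← algebraMap_smul (MonoidAlgebra R Γ) c m, map_smul, hm, smul_zero] }
          have hle : (⊤ : Submodule R (Jmod R Γ Sg q)) ≤ Ker := by
            rw [← B.span_eq]
            apply Submodule.span_le.2
            rintro _ ⟨s, rfl⟩
            exact hB s
          exact hle Submodule.mem_top
        have := hzero (Submodule.Quotient.mk ⟨x, hx⟩)
        rw [hellmk] at this
        exact this
      · intro hmem
        funext s
        apply Subtype.ext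
        show ell v (B s) = 0
        obtain ⟨z, hz⟩ := Submodule.Quotient.mk_surjective p (B s)
        rw [← hz, hellmk]
        exact hmem z.1 z.2
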